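/- In the cyclic suffix array of a multiset of primitive cyclic strings W, the suffix at rank i satisfies W_{SA_W[i]} = v̂[i] · v̂[Ψ_v(i)] · v̂[Ψ_v²(i)] · v̂[Ψ_v³(i)] · ⋯, where v = BWT(W), v̂ is v sorted, and Ψ_v is the standard permutation of v. -/

import Mathlib

set_option linter.unusedSectionVars false

namespace SILA

variable {α : Type*} [LinearOrder α]

/-- Lexicographic order on infinite strings. -/
def lexLE (f g : ℕ → α) : Prop :=
  f = g ∨ ∃ k, (∀ m < k, f m = g m) ∧ f k < g k

/-- Length of longest common prefix of two infinite strings, in ℕ∞. -/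
noncomputable def lcpInf (f g : ℕ → α) : ℕ∞ :=
  sSup {m : ℕ∞ | ∀ k : ℕ, (k : ℕ∞) < m → f k = g k}

/-- A (nonempty) cyclic word. -/
structure CyclicWord (α : Type*) where
  word : List α
  ne : word ≠ []

def CyclicWord.len (w : CyclicWord α) : ℕ := w.word.length

lemma CyclicWord.len_pos (w : CyclicWord α) : 0 < w.len :=
  List.length_pos_iff.mpr w.ne

/-- Positions in a multiset (family) of cyclic words. -/
def Pos {s : ℕ} (W : Fin s → CyclicWord α) : Type _ :=
  (i : Fin s) × Fin (W i).len

instance {s : ℕ} (W : Fin s → CyclicWord α) : Fintype (Pos W) := by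
  unfold Pos; infer_instance

/-- The infinite cyclic suffix starting at a position. -/
def suffixAt {s : ℕ} (W : Fin s → CyclicWord α) (p : Pos W) : ℕ → α :=
  fun k => (W p.1).word.get ⟨(p.2.val + k) % (W p.1).len, Nat.mod_lt _ (W p.1).len_pos⟩

/-- `SA` is a cyclic suffix array of `W`: it enumerates all positions in
nondecreasing lexicographic order of their cyclic suffixes. -/
def IsCyclicSA {s n : ℕ} (W : Fin s → CyclicWord α) (SA : Fin n ≃ Pos W) : Prop :=
  ∀ r r' : Fin n, r ≤ r' → lexLE (suffixAt W (SA r)) (suffixAt W (SA r'))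

/-- The LCP array of a cyclic suffix array (meaningful on indices 1..n-1). -/
noncomputable def lcpArr {s n : ℕ} (W : Fin s → CyclicWord α) (SA : Fin n ≃ Pos W)
    (r : ℕ) : ℕ∞ :=
  if h : 0 < r ∧ r < n then
    lcpInf (suffixAt W (SA ⟨r - 1, by omega⟩)) (suffixAt W (SA ⟨r, h.2⟩))
  else 0

/-- The Burrows–Wheeler transform: character cyclically preceding the suffix of rank `r`. -/
def bwt {s n : ℕ} (W : Fin s → CyclicWord α) (SA : Fin n ≃ Pos W) (r : Fin n) : α :=
  (W (SA r).1).word.get ⟨((SA r).2.val + (W (SA r).1).len - 1) % (W (SA r).1).len,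
    Nat.mod_lt _ (W (SA r).1).len_pos⟩

/-- `x` is a (finite) prefix of the infinite string `f`. -/
def IsPrefix (x : List α) (f : ℕ → α) : Prop :=
  ∀ m : Fin x.length, f m.val = x.get m

/-- `[i..j)` is the x-interval: the ranks of exactly those suffixes with prefix `x`. -/
def IsXInterval {s n : ℕ} (W : Fin s → CyclicWord α) (SA : Fin n ≃ Pos W)
    (x : List α) (i j : ℕ) : Prop :=
  i ≤ j ∧ j ≤ n ∧ ∀ r : Fin n, IsPrefix x (suffixAt W (SA r)) ↔ (i ≤ r.val ∧ r.val < j)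

/-- `[i..j)` is an ℓ-interval of the LCP array `L` (of length `n`, indices 1..n-1). -/
def IsLInterval (L : ℕ → ℕ∞) (n : ℕ) (ℓ : ℕ∞) (i j : ℕ) : Prop :=
  i < j ∧ j ≤ n ∧
  (i = 0 ∨ L i < ℓ) ∧
  (∀ r, i < r → r < j → ℓ ≤ L r) ∧
  ((i + 1 = j ∧ ℓ = ⊤) ∨ ∃ r, i < r ∧ r < j ∧ L r = ℓ) ∧
  (j = n ∨ L j < ℓ)



/-! ### Auxiliary machinery -/

section Aux

variable {s : ℕ}

/-- Prepend a character to an infinite string. -/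
def consF (c : α) (f : ℕ → α) : ℕ → α := fun k => Nat.casesOn k c f

@[simp] lemma consF_zero (c : α) (f : ℕ → α) : consF c f 0 = c := rfl
@[simp] lemma consF_succ (c : α) (f : ℕ → α) (k : ℕ) : consF c f (k + 1) = f k := rfl

lemma lex_lt_iff (f g : ℕ → α) :
    toLex f < toLex g ↔ ∃ k, (∀ m < k, f m = g m) ∧ f k < g k := Iff.rfl

lemma lexLE_iff_toLex_le (f g : ℕ → α) : lexLE f g ↔ toLex f ≤ toLex g := by
  rw [le_iff_lt_or_eq, lexLE]
  change _ ↔ (∃ k, (∀ m < k, f m = g m) ∧ f k < g k) ∨ _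
  constructor
  · rintro (rfl | h)
    · exact Or.inr rfl
    · exact Or.inl h
  · rintro (h | h)
    · exact Or.inr h
    · exact Or.inl (congrArg ofLex h)

lemma consF_le_consF_of_lt {c c' : α} (f g : ℕ → α) (h : c < c') :
    toLex (consF c f) ≤ toLex (consF c' g) :=
  le_of_lt ((lex_lt_iff _ _).mpr ⟨0, fun m hm => absurd hm (Nat.not_lt_zero m), h⟩)

lemma consF_le_consF_of_le {c : α} {f g : ℕ → α} (h : toLex f ≤ toLex g) :
    toLex (consF c f) ≤ toLex (consF c g) := by
  rcases le_iff_lt_or_eq.mp h with h | h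
  · obtain ⟨k, hk, hlt⟩ := (lex_lt_iff _ _).mp h
    refine le_of_lt ((lex_lt_iff _ _).mpr ⟨k + 1, ?_, hlt⟩)
    intro m hm
    cases m with
    | zero => rfl
    | succ m => exact hk m (Nat.lt_of_succ_lt_succ hm)
  · have hfg : f = g := congrArg ofLex h
    rw [hfg]

/-- Rotation backwards by one on `Fin m`. -/
def rotEquiv (m : ℕ) (hm : 0 < m) : Fin m ≃ Fin m where
  toFun q := ⟨(q.val + m - 1) % m, Nat.mod_lt _ hm⟩
  invFun q := ⟨(q.val + 1) % m, Nat.mod_lt _ hm⟩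
  left_inv q := by
    apply Fin.ext
    simp only
    rw [Nat.mod_add_mod]
    have h1 : q.val + m - 1 + 1 = q.val + m := by omega
    rw [h1, Nat.add_mod_right, Nat.mod_eq_of_lt q.isLt]
  right_inv q := by
    apply Fin.ext
    simp only
    have h1 : (q.val + 1) % m + m - 1 = (q.val + 1) % m + (m - 1) := by omega
    rw [h1, Nat.mod_add_mod]
    have h2 : q.val + 1 + (m - 1) = q.val + m := by omega
    rw [h2, Nat.add_mod_right, Nat.mod_eq_of_lt q.isLt]

/-- Cyclic predecessor on positions. -/
def predEquiv (W : Fin s → CyclicWord α) : Pos W ≃ Pos W :=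
  Equiv.sigmaCongrRight fun i => rotEquiv _ (W i).len_pos

lemma suffixAt_predEquiv (W : Fin s → CyclicWord α) (p : Pos W) :
    suffixAt W (predEquiv W p) =
      consF (suffixAt W (predEquiv W p) 0) (suffixAt W p) := by
  obtain ⟨i, q⟩ := p
  funext k
  cases k with
  | zero => rfl
  | succ k =>
    show suffixAt W ⟨i, (rotEquiv _ (W i).len_pos) q⟩ (k + 1) = suffixAt W ⟨i, q⟩ k
    unfold suffixAt
    congr 1
    apply Fin.ext
    show ((q.val + (W i).len - 1) % (W i).len + (k + 1)) % (W i).len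
        = (q.val + k) % (W i).len
    rw [Nat.mod_add_mod]
    have hl := (W i).len_pos
    have h1 : q.val + (W i).len - 1 + (k + 1) = q.val + k + (W i).len := by omega
    rw [h1, Nat.add_mod_right]

lemma suffixAt_predEquiv_zero (W : Fin s → CyclicWord α) (p : Pos W) :
    suffixAt W (predEquiv W p) 0 =
      (W p.1).word.get ⟨(p.2.val + (W p.1).len - 1) % (W p.1).len,
        Nat.mod_lt _ (W p.1).len_pos⟩ := by
  obtain ⟨i, q⟩ := p
  unfold suffixAt
  congr 1
  apply Fin.ext
  show ((q.val + (W i).len - 1) % (W i).len + 0) % (W i).len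
      = (q.val + (W i).len - 1) % (W i).len
  rw [Nat.add_zero, Nat.mod_mod_of_dvd _ dvd_rfl]

end Aux

/-- In the cyclic suffix array of a multiset of cyclic strings `W`,
the suffix of rank `r` equals `v̂[r]·v̂[Ψ r]·v̂[Ψ² r]⋯` where `v = BWT(W)`, `v̂` is `v`
sorted, and `Ψ` is the standard permutation of `v`. -/
theorem suffix_eq_iterate_stdPerm {α : Type*} [LinearOrder α] {s n : ℕ}
    (W : Fin s → CyclicWord α) (SA : Fin n ≃ Pos W) (hSA : IsCyclicSA W SA)
    (v : Fin n → α) (hv : v = bwt W SA)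
    (vhat : Fin n → α) (Ψ : Equiv.Perm (Fin n))
    (hsorted : Monotone vhat)
    (hperm : ∀ i, vhat i = v (Ψ i))
    (hstable : ∀ i j : Fin n, i < j → vhat i = vhat j → Ψ i < Ψ j) :
    ∀ (r : Fin n) (k : ℕ), suffixAt W (SA r) k = vhat ((Ψ ^ k) r) := by
  subst hv
  have he : ∀ r, SA (((Ψ.trans SA).trans ((predEquiv W).trans SA.symm)) r)
      = predEquiv W (SA (Ψ r)) := fun r => SA.apply_symm_apply _
  set e : Equiv.Perm (Fin n) := (Ψ.trans SA).trans ((predEquiv W).trans SA.symm) with hedef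
  set S : Fin n → Lex (ℕ → α) := fun r => toLex (suffixAt W (SA r)) with hSdef
  have hSmono : Monotone S := fun r r' h => (lexLE_iff_toLex_le _ _).mp (hSA r r' h)
  have hhead : ∀ r, suffixAt W (predEquiv W (SA (Ψ r))) 0 = vhat r := by
    intro r
    rw [suffixAt_predEquiv_zero, hperm r]
    rfl
  have hH : ∀ r, S (e r) = toLex (consF (vhat r) (suffixAt W (SA (Ψ r)))) := by
    intro r
    show toLex (suffixAt W (SA (e r))) = _
    rw [he r, suffixAt_predEquiv W (SA (Ψ r)), hhead r]
  have hHmono : Monotone (S ∘ e) := by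
    intro r r' hrr
    show S (e r) ≤ S (e r')
    rw [hH r, hH r']
    rcases lt_or_eq_of_le (hsorted hrr) with hlt | heq
    · exact consF_le_consF_of_lt _ _ hlt
    · rw [heq]
      rcases lt_or_eq_of_le hrr with hrlt | rfl
      · exact consF_le_consF_of_le (hSmono (le_of_lt (hstable r r' hrlt heq)))
      · exact le_refl _
  have hfinal : S ∘ e = S ∘ (1 : Equiv.Perm (Fin n)) :=
    Tuple.unique_monotone hHmono (by simpa using hSmono)
  have key : ∀ r, suffixAt W (SA r) = consF (vhat r) (suffixAt W (SA (Ψ r))) := by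
    intro r
    have h1 : S (e r) = S r := by
      have h2 := congrFun hfinal r
      simpa using h2
    rw [hH r] at h1
    exact (congrArg ofLex h1).symm
  intro r k
  induction k generalizing r with
  | zero =>
    have h0 := congrFun (key r) 0
    simpa using h0
  | succ k ih =>
    have h2 := congrFun (key r) (k + 1)
    rw [consF_succ] at h2
    rw [h2, ih (Ψ r), pow_succ]
    rfl


end SILA
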